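/- Let n = 3 and μ = Σ_{j=1}^3 a_j δ_{y_j} with distinct y_j ∈ I(3, Ω) and nonzero a_j ∈ ℂ, and let Y(ω) = F[μ](ω) + W(ω), ω ∈ [−Ω, Ω], with |W(ω)| < σ for all ω ∈ [−Ω, Ω]. If min_{p≠j} |y_p − y_j| ≥ (2π/Ω) · (8σ/m_min)^{1/4}, then there does not exist any σ-admissible measure of Y with only two support points; that is, there exist no distinct ŷ_1, ŷ_2 ∈ ℝ and â_1, â_2 ∈ ℂ such that |Σ_{l=1}^2 â_l e^{i ŷ_l ω} − Y(ω)| < σ for all ω ∈ [−Ω, Ω]. -/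

import Mathlib

open Real

noncomputable def E (y ω : ℝ) : ℂ := Complex.exp (Complex.I * (y:ℂ) * (ω:ℂ))

lemma E_add (y ω h : ℝ) : E y (ω + h) = E y h * E y ω := by
  unfold E; rw [← Complex.exp_add]; push_cast; ring_nf

lemma E_abs (y ω : ℝ) : ‖(E y ω)‖ = 1 := by
  unfold E
  rw [show Complex.I * (y:ℂ) * (ω:ℂ) = ((y*ω : ℝ):ℂ) * Complex.I by push_cast; ring]
  simp [Complex.norm_exp]

lemma f_abs (a b h : ℝ) : ‖(E a h - E b h)‖ = 2 * |Real.sin ((a-b)*h/2)| := by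
  have e1 : E a h = Complex.exp (((a+b)*h/2 : ℝ) * Complex.I) *
      Complex.exp (((a-b)*h/2 : ℝ) * Complex.I) := by
    unfold E; rw [← Complex.exp_add]; push_cast; ring_nf
  have e2 : E b h = Complex.exp (((a+b)*h/2 : ℝ) * Complex.I) *
      Complex.exp ((-((a-b)*h/2) : ℝ) * Complex.I) := by
    unfold E; rw [← Complex.exp_add]; push_cast; ring_nf
  have h2 : Complex.exp (((a-b)*h/2 : ℝ) * Complex.I) -
      Complex.exp ((-((a-b)*h/2) : ℝ) * Complex.I)
      = 2 * (Real.sin ((a-b)*h/2) : ℂ) * Complex.I := by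
    rw [Complex.exp_mul_I, Complex.exp_mul_I]
    push_cast
    rw [Complex.cos_neg, Complex.sin_neg]
    ring
  rw [e1, e2, ← mul_sub, norm_mul, h2]
  rw [norm_mul, norm_mul]
  simp [Complex.norm_exp, Complex.norm_real, Complex.norm_two]
  rw [show ((a:ℂ) - b) * h / 2 = (((a-b)*h/2 : ℝ) : ℂ) by push_cast; ring,
    ← Complex.ofReal_sin, Complex.norm_real, Real.norm_eq_abs]

lemma good_step (Ω t θ : ℝ) (hΩ : 0 < Ω) (ht0 : 0 < t) (ht : t < 1/2)
    (hθ : Real.pi * t / Ω ≤ |θ|) :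
    ∃ h : ℝ, 0 < h ∧ h ≤ Ω/2 ∧
      Real.pi/2 * (1 - Real.pi^2/256) * t ≤ 2 * |Real.sin (θ * h / 2)| := by
  have hpi := Real.pi_gt_three
  have hpi2 := Real.pi_lt_d2
  have hu0 : 0 < |θ| := lt_of_lt_of_le (by positivity) hθ
  have habs : ∀ h : ℝ, |Real.sin (θ * h / 2)| = |Real.sin (|θ| * h / 2)| := by
    intro h
    rcases abs_cases θ with ⟨h1, _⟩ | ⟨h1, _⟩
    · rw [h1]
    · rw [h1, show -θ * h / 2 = -(θ * h / 2) by ring, Real.sin_neg, abs_neg]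
  have h256 : Real.pi^2/256 < 1 := by nlinarith
  have hKpos : 0 < Real.pi/2 * (1 - Real.pi^2/256) := by nlinarith
  have hK2 : Real.pi/2 * (1 - Real.pi^2/256) < 2 := by nlinarith
  by_cases hc : 2 * Real.pi / Ω ≤ |θ|
  · refine ⟨Real.pi / |θ|, by positivity, ?_, ?_⟩
    · rw [div_le_div_iff₀ hu0 (by norm_num)]
      rw [div_le_iff₀ hΩ] at hc
      nlinarith
    · rw [habs, show |θ| * (Real.pi / |θ|) / 2 = Real.pi/2 by field_simp,
        Real.sin_pi_div_two, abs_one]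
      nlinarith [mul_le_mul hK2.le ht.le ht0.le (by norm_num : (0:ℝ) ≤ 2)]
  · push_neg at hc
    refine ⟨Ω/2, by positivity, le_refl _, ?_⟩
    rw [habs, show |θ| * (Ω/2) / 2 = |θ| * Ω / 4 by ring]
    rw [div_le_iff₀ hΩ] at hθ
    rw [lt_div_iff₀ hΩ] at hc
    have h1 : Real.pi * t / 4 ≤ |θ| * Ω / 4 := by nlinarith
    have h2 : |θ| * Ω / 4 < Real.pi / 2 := by nlinarith
    have hmem1 : Real.pi * t / 4 ∈ Set.Icc (-(Real.pi/2)) (Real.pi/2) := by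
      constructor <;> nlinarith
    have hmem2 : |θ| * Ω / 4 ∈ Set.Icc (-(Real.pi/2)) (Real.pi/2) := by
      constructor <;> nlinarith [mul_pos hu0 hΩ]
    have hmono : Real.sin (Real.pi * t / 4) ≤ Real.sin (|θ| * Ω / 4) :=
      Real.strictMonoOn_sin.monotoneOn hmem1 hmem2 h1
    have hx0 : 0 < Real.pi * t / 4 := by positivity
    have hx1 : Real.pi * t / 4 ≤ 1 := by nlinarith
    have hcube : Real.pi*t/4 - (Real.pi*t/4)^3/4 < Real.sin (Real.pi*t/4) := by
      have := Real.sin_gt_sub_cube hx0; linarith [pow_pos hx0 3]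
    have htt : t^2 < 1/4 := by nlinarith
    have ht3 : Real.pi^3 * t^3 ≤ Real.pi^3 * t / 4 := by
      nlinarith [mul_lt_mul_of_pos_left htt (mul_pos (pow_pos Real.pi_pos 3) ht0)]
    have e1 : (Real.pi*t/4)^3/4 = Real.pi^3*t^3/256 := by ring
    rw [e1] at hcube
    have e2 : Real.pi/2 * (1 - Real.pi^2/256) * t / 2
        = Real.pi*t/4 - Real.pi^3*t/1024 := by ring
    have hsin : Real.pi/2 * (1 - Real.pi^2/256) * t / 2 ≤ Real.sin (Real.pi * t / 4) := by
      rw [e2]; linarith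
    have hfin : Real.sin (Real.pi * t / 4) ≤ |Real.sin (|θ| * Ω / 4)| :=
      le_trans hmono (le_abs_self _)
    linarith



set_option maxHeartbeats 2000000 in
lemma key (Ω σ m t : ℝ) (hΩ : 0 < Ω) (hσ : 0 < σ) (hm : 0 < m)
    (ht0 : 0 < t) (ht : t < 1/2) (ht4 : m * t^4 = 8*σ)
    (Y0 x1 x2 x3 x4 : ℝ) (A0 c1 c2 c3 c4 : ℂ)
    (hA0 : m ≤ ‖A0‖)
    (hx1 : Real.pi * t / Ω ≤ |Y0 - x1|) (hx2 : Real.pi * t / Ω ≤ |Y0 - x2|)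
    (hx3 : Real.pi * t / Ω ≤ |Y0 - x3|) (hx4 : Real.pi * t / Ω ≤ |Y0 - x4|)
    (G : ℝ → ℂ)
    (hGeq : ∀ ω, G ω = A0 * E Y0 ω + c1 * E x1 ω + c2 * E x2 ω + c3 * E x3 ω + c4 * E x4 ω)
    (hG : ∀ ω ∈ Set.Icc (-Ω) Ω, ‖(G ω)‖ < 2*σ) : False := by
  obtain ⟨h₁, h₁0, h₁le, h₁sin⟩ := good_step Ω t (Y0 - x1) hΩ ht0 ht hx1
  obtain ⟨h₂, h₂0, h₂le, h₂sin⟩ := good_step Ω t (Y0 - x2) hΩ ht0 ht hx2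
  obtain ⟨h₃, h₃0, h₃le, h₃sin⟩ := good_step Ω t (Y0 - x3) hΩ ht0 ht hx3
  obtain ⟨h₄, h₄0, h₄le, h₄sin⟩ := good_step Ω t (Y0 - x4) hΩ ht0 ht hx4
  set G1 : ℝ → ℂ := fun ω => G (ω + h₁) - E x1 h₁ * G ω with hG1
  set G2 : ℝ → ℂ := fun ω => G1 (ω + h₂) - E x2 h₂ * G1 ω with hG2
  set G3 : ℝ → ℂ := fun ω => G2 (ω + h₃) - E x3 h₃ * G2 ω with hG3
  set G4 : ℝ → ℂ := fun ω => G3 (ω + h₄) - E x4 h₄ * G3 ω with hG4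
  have hv : G4 (-Ω) = A0 * ((E Y0 h₁ - E x1 h₁) * (E Y0 h₂ - E x2 h₂) *
      (E Y0 h₃ - E x3 h₃) * (E Y0 h₄ - E x4 h₄)) * E Y0 (-Ω) := by
    simp only [hG4, hG3, hG2, hG1, hGeq, E_add]
    ring
  have hB1 : ∀ ω, -Ω ≤ ω → ω ≤ Ω - h₁ → ‖(G1 ω)‖ < 4*σ := by
    intro ω hl hr
    have b1 := hG (ω + h₁) ⟨by linarith, by linarith⟩
    have b2 := hG ω ⟨hl, by linarith⟩
    calc ‖(G1 ω)‖ = ‖(G (ω + h₁) - E x1 h₁ * G ω)‖ := rfl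
      _ ≤ ‖(G (ω + h₁))‖ + ‖(E x1 h₁ * G ω)‖ :=
          norm_sub_le _ _
      _ = ‖(G (ω + h₁))‖ + ‖(G ω)‖ := by
          rw [norm_mul, E_abs, one_mul]
      _ < 4*σ := by linarith
  have hB2 : ∀ ω, -Ω ≤ ω → ω ≤ Ω - h₁ - h₂ → ‖(G2 ω)‖ < 8*σ := by
    intro ω hl hr
    have b1 := hB1 (ω + h₂) (by linarith) (by linarith)
    have b2 := hB1 ω hl (by linarith)
    calc ‖(G2 ω)‖ = ‖(G1 (ω + h₂) - E x2 h₂ * G1 ω)‖ := rfl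
      _ ≤ ‖(G1 (ω + h₂))‖ + ‖(E x2 h₂ * G1 ω)‖ :=
          norm_sub_le _ _
      _ = ‖(G1 (ω + h₂))‖ + ‖(G1 ω)‖ := by
          rw [norm_mul, E_abs, one_mul]
      _ < 8*σ := by linarith
  have hB3 : ∀ ω, -Ω ≤ ω → ω ≤ Ω - h₁ - h₂ - h₃ → ‖(G3 ω)‖ < 16*σ := by
    intro ω hl hr
    have b1 := hB2 (ω + h₃) (by linarith) (by linarith)
    have b2 := hB2 ω hl (by linarith)
    calc ‖(G3 ω)‖ = ‖(G2 (ω + h₃) - E x3 h₃ * G2 ω)‖ := rfl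
      _ ≤ ‖(G2 (ω + h₃))‖ + ‖(E x3 h₃ * G2 ω)‖ :=
          norm_sub_le _ _
      _ = ‖(G2 (ω + h₃))‖ + ‖(G2 ω)‖ := by
          rw [norm_mul, E_abs, one_mul]
      _ < 16*σ := by linarith
  have hB4 : ‖(G4 (-Ω))‖ < 32*σ := by
    have b1 := hB3 (-Ω + h₄) (by linarith) (by linarith)
    have b2 := hB3 (-Ω) le_rfl (by linarith)
    calc ‖(G4 (-Ω))‖ = ‖(G3 (-Ω + h₄) - E x4 h₄ * G3 (-Ω))‖ := rfl
      _ ≤ ‖(G3 (-Ω + h₄))‖ + ‖(E x4 h₄ * G3 (-Ω))‖ :=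
          norm_sub_le _ _
      _ = ‖(G3 (-Ω + h₄))‖ + ‖(G3 (-Ω))‖ := by
          rw [norm_mul, E_abs, one_mul]
      _ < 32*σ := by linarith
  rw [hv] at hB4
  set K := Real.pi/2 * (1 - Real.pi^2/256) with hK
  have hpi := Real.pi_gt_d2
  have hpi2 := Real.pi_lt_d2
  have hKpos : 0 < K := by rw [hK]; nlinarith
  have hKt0 : 0 < K * t := mul_pos hKpos ht0
  set s1 := 2*|Real.sin ((Y0-x1)*h₁/2)| with hs1
  set s2 := 2*|Real.sin ((Y0-x2)*h₂/2)| with hs2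
  set s3 := 2*|Real.sin ((Y0-x3)*h₃/2)| with hs3
  set s4 := 2*|Real.sin ((Y0-x4)*h₄/2)| with hs4
  have habs : ‖(A0 * ((E Y0 h₁ - E x1 h₁) * (E Y0 h₂ - E x2 h₂) *
      (E Y0 h₃ - E x3 h₃) * (E Y0 h₄ - E x4 h₄)) * E Y0 (-Ω))‖
      = ‖A0‖ * (s1 * s2 * s3 * s4) := by
    rw [norm_mul, norm_mul, E_abs, mul_one, norm_mul, norm_mul, norm_mul,
      f_abs, f_abs, f_abs, f_abs]
  rw [habs] at hB4
  have m12 : (K*t)*(K*t) ≤ s1*s2 := mul_le_mul h₁sin h₂sin hKt0.le (le_trans hKt0.le h₁sin)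
  have m34 : (K*t)*(K*t) ≤ s3*s4 := mul_le_mul h₃sin h₄sin hKt0.le (le_trans hKt0.le h₃sin)
  have m1234 : ((K*t)*(K*t))*((K*t)*(K*t)) ≤ (s1*s2)*(s3*s4) :=
    mul_le_mul m12 m34 (by positivity) (le_trans (by positivity) m12)
  have mall : m * (((K*t)*(K*t))*((K*t)*(K*t))) ≤ ‖A0‖ * ((s1*s2)*(s3*s4)) :=
    mul_le_mul hA0 m1234 (by positivity) (le_trans hm.le hA0)
  have hfin : m * (((K*t)*(K*t))*((K*t)*(K*t))) < 32*σ := by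
    refine lt_of_le_of_lt mall ?_
    calc ‖A0‖ * ((s1*s2)*(s3*s4)) = ‖A0‖ * (s1*s2*s3*s4) := by ring
      _ < 32*σ := hB4
  have hexp : m * (((K*t)*(K*t))*((K*t)*(K*t))) = K^4 * (m * t^4) := by ring
  rw [hexp, ht4] at hfin
  have hK4 : K^4 < 4 := by nlinarith
  have hK2 : 2 < K^2 := by
    have hp2l : (9.8596:ℝ) < Real.pi^2 := by nlinarith
    have hp2u : Real.pi^2 < (9.9225:ℝ) := by nlinarith
    have hAl : (0.961:ℝ) < 1 - Real.pi^2/256 := by linarith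
    have hA2 : (0.961:ℝ)^2 < (1 - Real.pi^2/256)^2 := by nlinarith
    have hKsq : K^2 = Real.pi^2/4 * (1 - Real.pi^2/256)^2 := by rw [hK]; ring
    rw [hKsq]
    nlinarith [mul_lt_mul_of_pos_left hA2 (show (0:ℝ) < Real.pi^2/4 by positivity),
      mul_lt_mul_of_pos_right hp2l (show (0:ℝ) < (0.961:ℝ)^2/4 by norm_num)]
  nlinarith

/-- **Stability of number detection, case `n = 3` (Theorem 3.1).**
Let `μ = Σ_{j=1}^3 a_j δ_{y_j}` with distinct `y_j ∈ I(3,Ω)` and nonzero amplitudes,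
and `Y(ω) = F[μ](ω) + W(ω)` on `[−Ω,Ω]` with `|W(ω)| < σ`.  If
`min_{p≠j} |y_p − y_j| ≥ (2π/Ω) (8σ/m_min)^{1/4}`, then there is no σ-admissible
measure of `Y` with only two support points. -/
theorem number_detection_stability_three_points
    (Ω σ : ℝ) (hΩ : 0 < Ω) (hσ : 0 < σ)
    (y : Fin 3 → ℝ) (hy : Function.Injective y)
    (a : Fin 3 → ℂ) (ha : ∀ j, a j ≠ 0)
    (hloc : ∀ j, y j ∈ Set.Ioo (-(Real.pi / Ω)) (Real.pi / Ω))
    (mmin : ℝ) (hmmin : mmin = ⨅ j, ‖a j‖)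
    (W : ℝ → ℂ) (hW : ∀ ω ∈ Set.Icc (-Ω) Ω, ‖W ω‖ < σ)
    (hsep : ∀ p j, p ≠ j →
      2 * Real.pi / Ω * (8 * σ / mmin) ^ ((1 : ℝ) / 4) ≤ |y p - y j|) :
    ¬ ∃ (yh₁ yh₂ : ℝ) (_ : yh₁ ≠ yh₂) (ah₁ ah₂ : ℂ),
        ∀ ω ∈ Set.Icc (-Ω) Ω,
          ‖(ah₁ * Complex.exp (Complex.I * (yh₁ : ℂ) * (ω : ℂ))
              + ah₂ * Complex.exp (Complex.I * (yh₂ : ℂ) * (ω : ℂ))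
              - (∑ j, a j * Complex.exp (Complex.I * (y j : ℂ) * (ω : ℂ)) + W ω))‖ < σ := by
  rintro ⟨yh₁, yh₂, hne, ah₁, ah₂, hadm⟩
  -- mmin facts
  have hmle : ∀ j, mmin ≤ ‖(a j)‖ := by
    intro j
    rw [hmmin]
    exact ciInf_le (Finite.bddBelow_range _) j
  have hm0 : 0 < mmin := by
    obtain ⟨j, hj⟩ := Finite.exists_min fun j => ‖(a j)‖
    have h1 : mmin = ‖(a j)‖ :=
      le_antisymm (hmle j) (by rw [hmmin]; exact le_ciInf hj)
    rw [h1]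
    exact norm_pos_iff.mpr (ha j)
  -- t facts
  set t : ℝ := (8 * σ / mmin) ^ ((1 : ℝ) / 4) with htdef
  have hbase : 0 < 8 * σ / mmin := by positivity
  have ht0 : 0 < t := Real.rpow_pos_of_pos hbase _
  have ht4 : mmin * t ^ 4 = 8 * σ := by
    have : t ^ (4:ℕ) = 8 * σ / mmin := by
      rw [htdef, ← Real.rpow_natCast (_ ^ _) 4, ← Real.rpow_mul hbase.le]
      norm_num
    rw [this]
    field_simp
  -- t < 1/2
  have hpi := Real.pi_pos
  have hsep' : ∀ p j, p ≠ j → 2 * Real.pi / Ω * t ≤ |y p - y j| := fun p j h => hsep p j h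
  have ht : t < 1/2 := by
    have h01 := hsep' 0 1 (by decide)
    have h12 := hsep' 1 2 (by decide)
    have h02 := hsep' 0 2 (by decide)
    obtain ⟨l0, u0⟩ := hloc 0
    obtain ⟨l1, u1⟩ := hloc 1
    obtain ⟨l2, u2⟩ := hloc 2
    have hs : 2 * Real.pi / Ω * t < Real.pi / Ω := by
      rcases le_abs.mp h01 with h | h <;> rcases le_abs.mp h12 with h' | h' <;>
        rcases le_abs.mp h02 with h'' | h'' <;> linarith
    rw [div_mul_eq_mul_div, div_lt_div_iff₀ hΩ hΩ] at hs
    nlinarith [mul_pos hpi hΩ]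
  -- pigeonhole : a good j0
  have hδ0 : 0 < Real.pi * t / Ω := by positivity
  have hpig : ∃ j0 : Fin 3, Real.pi * t / Ω ≤ |yh₁ - y j0| ∧ Real.pi * t / Ω ≤ |yh₂ - y j0| := by
    by_contra hcon
    push_neg at hcon
    have hfar : ∀ j : Fin 3, |yh₁ - y j| < Real.pi * t / Ω ∨ |yh₂ - y j| < Real.pi * t / Ω := by
      intro j
      by_cases h : Real.pi * t / Ω ≤ |yh₁ - y j|
      · exact Or.inr (hcon j h)
      · exact Or.inl (lt_of_not_ge h)
    set f : Fin 3 → Fin 2 := fun j => if |yh₁ - y j| < Real.pi * t / Ω then 0 else 1 with hf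
    obtain ⟨p, q, hpq, hfeq⟩ := Fintype.exists_ne_map_eq_of_card_lt f (by norm_num)
    have hcontra : |y p - y q| < 2 * Real.pi / Ω * t := by
      by_cases hp : |yh₁ - y p| < Real.pi * t / Ω
      · have hq : |yh₁ - y q| < Real.pi * t / Ω := by
          by_contra hq
          simp only [hf, if_pos hp, if_neg hq] at hfeq
          exact absurd hfeq (by decide)
        have := abs_sub_abs_le_abs_sub (yh₁ - y q) (yh₁ - y p)
        have h3 : |y p - y q| ≤ |yh₁ - y p| + |yh₁ - y q| := by
          have := abs_sub (yh₁ - y p) (yh₁ - y q)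
          calc |y p - y q| = |(yh₁ - y q) - (yh₁ - y p)| := by ring_nf
            _ ≤ |yh₁ - y q| + |yh₁ - y p| := abs_sub _ _
            _ = |yh₁ - y p| + |yh₁ - y q| := by ring
        calc |y p - y q| ≤ |yh₁ - y p| + |yh₁ - y q| := h3
          _ < 2 * (Real.pi * t / Ω) := by linarith
          _ = 2 * Real.pi / Ω * t := by ring
      · have hp2 : |yh₂ - y p| < Real.pi * t / Ω := (hfar p).resolve_left hp
        have hq2 : |yh₂ - y q| < Real.pi * t / Ω := by
          by_cases hq : |yh₁ - y q| < Real.pi * t / Ω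
          · simp only [hf, if_neg hp, if_pos hq] at hfeq
            exact absurd hfeq (by decide)
          · exact (hfar q).resolve_left hq
        have h3 : |y p - y q| ≤ |yh₂ - y p| + |yh₂ - y q| := by
          calc |y p - y q| = |(yh₂ - y q) - (yh₂ - y p)| := by ring_nf
            _ ≤ |yh₂ - y q| + |yh₂ - y p| := abs_sub _ _
            _ = |yh₂ - y p| + |yh₂ - y q| := by ring
        calc |y p - y q| ≤ |yh₂ - y p| + |yh₂ - y q| := h3
          _ < 2 * (Real.pi * t / Ω) := by linarith
          _ = 2 * Real.pi / Ω * t := by ring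
    exact absurd (hsep' p q hpq) (not_le.mpr hcontra)
  obtain ⟨j0, hj1, hj2⟩ := hpig
  -- the difference function
  set G : ℝ → ℂ := fun ω => ah₁ * Complex.exp (Complex.I * (yh₁ : ℂ) * (ω : ℂ))
      + ah₂ * Complex.exp (Complex.I * (yh₂ : ℂ) * (ω : ℂ))
      - ∑ j, a j * Complex.exp (Complex.I * (y j : ℂ) * (ω : ℂ)) with hGdef
  have hG : ∀ ω ∈ Set.Icc (-Ω) Ω, ‖(G ω)‖ < 2 * σ := by
    intro ω hω
    have h1 := hadm ω hω
    have h2 := hW ω hω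
    have heq : G ω = (ah₁ * Complex.exp (Complex.I * (yh₁ : ℂ) * (ω : ℂ))
        + ah₂ * Complex.exp (Complex.I * (yh₂ : ℂ) * (ω : ℂ))
        - (∑ j, a j * Complex.exp (Complex.I * (y j : ℂ) * (ω : ℂ)) + W ω)) + W ω := by
      rw [hGdef]; ring
    rw [heq]
    calc ‖_‖ ≤ ‖_‖ + ‖(W ω)‖ := norm_add_le _ _
      _ < 2 * σ := by linarith
  -- separation facts for y-pairs
  have hyy : ∀ p q : Fin 3, p ≠ q → Real.pi * t / Ω ≤ |y p - y q| := by
    intro p q hpq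
    refine le_trans ?_ (hsep' p q hpq)
    rw [div_mul_eq_mul_div, div_le_div_iff₀ hΩ hΩ]
    nlinarith [mul_pos (mul_pos hpi ht0) hΩ]
  have habs1 : Real.pi * t / Ω ≤ |y j0 - yh₁| := by rwa [abs_sub_comm]
  have habs2 : Real.pi * t / Ω ≤ |y j0 - yh₂| := by rwa [abs_sub_comm]
  have hA0 : ∀ j : Fin 3, mmin ≤ ‖(-(a j))‖ := by
    intro j; rw [norm_neg]; exact hmle j
  fin_cases j0
  · exact key Ω σ mmin t hΩ hσ hm0 ht0 ht ht4 (y 0) (y 1) (y 2) yh₁ yh₂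
      (-(a 0)) (-(a 1)) (-(a 2)) ah₁ ah₂ (hA0 0)
      (hyy 0 1 (by decide)) (hyy 0 2 (by decide)) habs1 habs2 G
      (by intro ω; rw [hGdef]; simp only [Fin.sum_univ_three, E]; ring) hG
  · exact key Ω σ mmin t hΩ hσ hm0 ht0 ht ht4 (y 1) (y 0) (y 2) yh₁ yh₂
      (-(a 1)) (-(a 0)) (-(a 2)) ah₁ ah₂ (hA0 1)
      (hyy 1 0 (by decide)) (hyy 1 2 (by decide)) habs1 habs2 G
      (by intro ω; rw [hGdef]; simp only [Fin.sum_univ_three, E]; ring) hG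
  · exact key Ω σ mmin t hΩ hσ hm0 ht0 ht ht4 (y 2) (y 0) (y 1) yh₁ yh₂
      (-(a 2)) (-(a 0)) (-(a 1)) ah₁ ah₂ (hA0 2)
      (hyy 2 0 (by decide)) (hyy 2 1 (by decide)) habs1 habs2 G
      (by intro ω; rw [hGdef]; simp only [Fin.sum_univ_three, E]; ring) hG
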